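/- Define F(δ) = (1/(πD)) ∫_{−δ/2}^{(2π/D − δ)/2} sin²(Dy)/sin²(y) dy for δ ∈ [0, 2π/D] and integer D ≥ 2. Then F'(δ) = (1/(2πD))·(sin²(Dδ/2)/sin²(δ/2) − sin²(Dδ/2)/sin²((2π/D − δ)/2)), F'(δ) > 0 for 0 < δ < π/D, F'(δ) < 0 for π/D < δ < 2π/D, and F(0) = F(2π/D); hence F attains its minimum on [0, 2π/D] at the endpoints. -/

import Mathlib

open Real MeasureTheory Set

noncomputable def Fint (D : ℕ) (δ : ℝ) : ℝ :=
  (1 / (Real.pi * D)) *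
    ∫ y in (-δ / 2)..((2 * Real.pi / D - δ) / 2), Real.sin (D * y) ^ 2 / Real.sin y ^ 2

noncomputable def gQ (D : ℕ) (y : ℝ) : ℝ := Real.sin (D * y) ^ 2 / Real.sin y ^ 2

lemma sin_nat_mul_bound (n : ℕ) (x : ℝ) : |Real.sin (n * x)| ≤ n * |Real.sin x| := by
  induction n with
  | zero => simp
  | succ n ih =>
    have : ((n : ℝ) + 1) * x = n * x + x := by ring
    push_cast
    rw [this, Real.sin_add]
    calc |Real.sin (n*x) * Real.cos x + Real.cos (n*x) * Real.sin x|
        ≤ |Real.sin (n*x) * Real.cos x| + |Real.cos (n*x) * Real.sin x| := abs_add_le _ _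
      _ ≤ |Real.sin (n*x)| * 1 + 1 * |Real.sin x| := by
          rw [abs_mul, abs_mul]
          gcongr
          all_goals exact Real.abs_cos_le_one _
      _ ≤ (n : ℝ) * |Real.sin x| + 1 * |Real.sin x| := by
          rw [mul_one]; gcongr
      _ = ((n : ℝ) + 1) * |Real.sin x| := by ring

lemma gQ_nonneg (D : ℕ) (y : ℝ) : 0 ≤ gQ D y := div_nonneg (sq_nonneg _) (sq_nonneg _)

lemma gQ_le (D : ℕ) (y : ℝ) : gQ D y ≤ (D : ℝ)^2 := by
  unfold gQ
  rcases eq_or_ne (Real.sin y) 0 with h | h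
  · simp [h]
  · rw [div_le_iff₀ (by positivity)]
    have h1 := sin_nat_mul_bound D y
    calc Real.sin (D*y)^2 = |Real.sin (D*y)|^2 := (sq_abs _).symm
      _ ≤ ((D:ℝ) * |Real.sin y|)^2 := by
          apply pow_le_pow_left₀ (abs_nonneg _) h1
      _ = (D:ℝ)^2 * Real.sin y ^2 := by rw [mul_pow, sq_abs]

lemma gQ_meas (D : ℕ) : Measurable (gQ D) := by
  exact ((Real.continuous_sin.comp (continuous_const.mul continuous_id)).pow 2).measurable.div
    ((Real.continuous_sin.pow 2).measurable)

lemma gQ_intInt (D : ℕ) (a b : ℝ) : IntervalIntegrable (gQ D) volume a b := by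
  rw [intervalIntegrable_iff]
  have : IsFiniteMeasure (volume.restrict (Set.uIoc a b)) :=
    ⟨by rw [Measure.restrict_apply_univ, Set.uIoc]; exact measure_Ioc_lt_top⟩
  apply Integrable.mono' (integrable_const ((D:ℝ)^2)) (gQ_meas D).aestronglyMeasurable.restrict
  filter_upwards with y
  rw [Real.norm_eq_abs, abs_of_nonneg (gQ_nonneg D y)]
  exact gQ_le D y

lemma gQ_even (D : ℕ) (y : ℝ) : gQ D (-y) = gQ D y := by
  unfold gQ
  rw [mul_neg, Real.sin_neg, Real.sin_neg, neg_pow, neg_pow]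
  simp

noncomputable def GQ (D : ℕ) (x : ℝ) : ℝ := ∫ y in (0 : ℝ)..x, gQ D y

lemma GQ_cont (D : ℕ) : Continuous (GQ D) :=
  intervalIntegral.continuous_primitive (fun a b => gQ_intInt D a b) 0

lemma GQ_hasDeriv (D : ℕ) (p : ℝ) (hp : Real.sin p ≠ 0) : HasDerivAt (GQ D) (gQ D p) p := by
  apply intervalIntegral.integral_hasDerivAt_right (gQ_intInt D 0 p)
    ((gQ_meas D).stronglyMeasurable.stronglyMeasurableAtFilter)
  exact ContinuousAt.div (by fun_prop) (by fun_prop) (pow_ne_zero 2 hp)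

lemma Fint_eq (D : ℕ) : Fint D = fun δ =>
    (1 / (Real.pi * D)) * (GQ D ((2 * Real.pi / D - δ) / 2) - GQ D (-δ / 2)) := by
  funext δ
  unfold Fint GQ
  rw [intervalIntegral.integral_interval_sub_left (gQ_intInt D 0 _) (gQ_intInt D 0 _)]
  rfl

lemma Fint_hasDeriv (D : ℕ) (hD : 2 ≤ D) {δ : ℝ} (hδ : δ ∈ Set.Ioo (0 : ℝ) (2 * Real.pi / D)) :
    HasDerivAt (Fint D)
      ((1 / (2 * Real.pi * D)) *
        (Real.sin (D * δ / 2) ^ 2 / Real.sin (δ / 2) ^ 2 -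
          Real.sin (D * δ / 2) ^ 2 / Real.sin ((2 * Real.pi / D - δ) / 2) ^ 2)) δ := by
  obtain ⟨h0, h2⟩ := hδ
  have hD0 : (0 : ℝ) < D := by positivity
  have hD2 : (2 : ℝ) ≤ D := by exact_mod_cast hD
  have hDpi : 2 * Real.pi / D ≤ Real.pi := by
    rw [div_le_iff₀ hD0]
    nlinarith [Real.pi_pos]
  have hs1 : Real.sin (δ / 2) ≠ 0 := by
    have : δ / 2 < Real.pi := by nlinarith
    exact ne_of_gt (Real.sin_pos_of_pos_of_lt_pi (by linarith) this)
  have hs2 : Real.sin ((2 * Real.pi / D - δ) / 2) ≠ 0 := by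
    have h1 : 0 < (2 * Real.pi / D - δ) / 2 := by linarith
    have : (2 * Real.pi / D - δ) / 2 < Real.pi := by nlinarith [Real.pi_pos]
    exact ne_of_gt (Real.sin_pos_of_pos_of_lt_pi h1 this)
  have hsa : Real.sin (-δ / 2) ≠ 0 := by
    rw [neg_div, Real.sin_neg]; simpa using hs1
  have hb : HasDerivAt (fun x : ℝ => (2 * Real.pi / D - x) / 2) ((-1) / 2) δ :=
    ((hasDerivAt_id δ).const_sub (2 * Real.pi / D)).div_const 2
  have ha : HasDerivAt (fun x : ℝ => -x / 2) ((-1) / 2) δ := by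
    simpa using ((hasDerivAt_id δ).neg).div_const 2
  have hGb := (GQ_hasDeriv D _ hs2).comp δ hb
  have hGa := (GQ_hasDeriv D _ hsa).comp δ ha
  have H := (hGb.sub hGa).const_mul (1 / (Real.pi * D))
  rw [Fint_eq]
  have hga : gQ D (-δ / 2) = Real.sin (D * δ / 2) ^ 2 / Real.sin (δ / 2) ^ 2 := by
    have e1 : (D : ℝ) * (-δ / 2) = -(D * δ / 2) := by ring
    unfold gQ
    rw [e1, Real.sin_neg, neg_div, Real.sin_neg, neg_sq, neg_sq]
  have hgb : gQ D ((2 * Real.pi / D - δ) / 2) =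
      Real.sin (D * δ / 2) ^ 2 / Real.sin ((2 * Real.pi / D - δ) / 2) ^ 2 := by
    have e2 : (D : ℝ) * ((2 * Real.pi / D - δ) / 2) = Real.pi - D * δ / 2 := by
      field_simp
    unfold gQ
    rw [e2, Real.sin_pi_sub]
  refine HasDerivAt.congr_deriv H ?_
  rw [hga, hgb]
  ring

lemma Fint_cont (D : ℕ) : Continuous (Fint D) := by
  rw [Fint_eq]
  exact continuous_const.mul (((GQ_cont D).comp (by fun_prop)).sub ((GQ_cont D).comp (by fun_prop)))

theorem Fint_deriv_and_min (D : ℕ) (hD : 2 ≤ D) :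
    (∀ δ ∈ Set.Ioo (0 : ℝ) (2 * Real.pi / D),
      HasDerivAt (Fint D)
        ((1 / (2 * Real.pi * D)) *
          (Real.sin (D * δ / 2) ^ 2 / Real.sin (δ / 2) ^ 2 -
            Real.sin (D * δ / 2) ^ 2 / Real.sin ((2 * Real.pi / D - δ) / 2) ^ 2)) δ) ∧
    (∀ δ : ℝ, 0 < δ → δ < Real.pi / D → 0 < deriv (Fint D) δ) ∧
    (∀ δ : ℝ, Real.pi / D < δ → δ < 2 * Real.pi / D → deriv (Fint D) δ < 0) ∧
    Fint D 0 = Fint D (2 * Real.pi / D) ∧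
    (∀ δ ∈ Set.Icc (0 : ℝ) (2 * Real.pi / D), Fint D 0 ≤ Fint D δ) := by
  have hD0 : (0 : ℝ) < D := by positivity
  have hD2 : (2 : ℝ) ≤ D := by exact_mod_cast hD
  have hπ := Real.pi_pos
  have hDhalf : Real.pi / D ≤ Real.pi / 2 := by
    apply div_le_div_of_nonneg_left hπ.le (by norm_num) hD2
  have hdd : 2 * Real.pi / (D:ℝ) = 2 * (Real.pi / D) := by ring
  have hsub : Real.pi / D < 2 * Real.pi / D := by
    rw [div_lt_div_iff₀ hD0 hD0]
    nlinarith
  have hP : ∀ δ : ℝ, 0 < δ → δ < 2 * Real.pi / D → 0 < Real.sin (D * δ / 2) ^ 2 := by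
    intro δ h1 h2
    have hlt : δ * D < 2 * Real.pi := (lt_div_iff₀ hD0).mp h2
    have : 0 < Real.sin (D * δ / 2) := by
      apply Real.sin_pos_of_pos_of_lt_pi (by positivity)
      nlinarith
    positivity
  have sign2 : ∀ δ : ℝ, 0 < δ → δ < Real.pi / D → 0 < deriv (Fint D) δ := by
    intro δ h1 h2
    have hmem : δ ∈ Set.Ioo (0 : ℝ) (2 * Real.pi / D) := ⟨h1, lt_trans h2 hsub⟩
    rw [(Fint_hasDeriv D hD hmem).deriv]
    have ht1 : δ / 2 < (2 * Real.pi / D - δ) / 2 := by linarith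
    have ht2 : (2 * Real.pi / D - δ) / 2 ≤ Real.pi / 2 := by
      have : 2 * Real.pi / D - δ < 2 * (Real.pi / D) := by
        rw [mul_div_assoc] at hmem ⊢
        linarith [hmem.2]
      linarith [hDhalf]
    have hss : 0 < Real.sin (δ / 2) := by
      apply Real.sin_pos_of_pos_of_lt_pi (by linarith)
      linarith [Real.pi_pos]
    have hst : Real.sin (δ / 2) < Real.sin ((2 * Real.pi / D - δ) / 2) :=
      Real.strictMonoOn_sin ⟨by linarith, by linarith⟩ ⟨by linarith, ht2⟩ ht1
    have hX : (0 : ℝ) < Real.sin (δ / 2) ^ 2 := by positivity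
    have hXY : Real.sin (δ / 2) ^ 2 < Real.sin ((2 * Real.pi / D - δ) / 2) ^ 2 := by nlinarith
    have hdiv := div_lt_div_of_pos_left (hP δ h1 hmem.2) hX hXY
    have : (0 : ℝ) < 1 / (2 * Real.pi * D) := by positivity
    apply mul_pos this
    linarith
  have sign3 : ∀ δ : ℝ, Real.pi / D < δ → δ < 2 * Real.pi / D → deriv (Fint D) δ < 0 := by
    intro δ h1 h2
    have h0 : 0 < δ := lt_trans (by positivity) h1
    have hmem : δ ∈ Set.Ioo (0 : ℝ) (2 * Real.pi / D) := ⟨h0, h2⟩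
    rw [(Fint_hasDeriv D hD hmem).deriv]
    have ht1 : (2 * Real.pi / D - δ) / 2 < δ / 2 := by linarith
    have ht0 : 0 < (2 * Real.pi / D - δ) / 2 := by linarith
    have ht2 : δ / 2 ≤ Real.pi / 2 := by
      have : δ < 2 * (Real.pi / D) := by rw [mul_div_assoc] at h2; linarith
      linarith [hDhalf]
    have hss : 0 < Real.sin ((2 * Real.pi / D - δ) / 2) := by
      apply Real.sin_pos_of_pos_of_lt_pi ht0
      linarith [Real.pi_pos]
    have hst : Real.sin ((2 * Real.pi / D - δ) / 2) < Real.sin (δ / 2) :=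
      Real.strictMonoOn_sin ⟨by linarith, by linarith⟩ ⟨by linarith, ht2⟩ ht1
    have hX : (0 : ℝ) < Real.sin ((2 * Real.pi / D - δ) / 2) ^ 2 := by positivity
    have hXY : Real.sin ((2 * Real.pi / D - δ) / 2) ^ 2 < Real.sin (δ / 2) ^ 2 := by nlinarith
    have hdiv := div_lt_div_of_pos_left (hP δ h0 h2) hX hXY
    have hc : (0 : ℝ) < 1 / (2 * Real.pi * D) := by positivity
    apply mul_neg_of_pos_of_neg hc
    linarith
  have hsymm : Fint D 0 = Fint D (2 * Real.pi / D) := by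
    have h := intervalIntegral.integral_comp_neg (a := (0:ℝ)) (b := Real.pi / D) (fun y => gQ D y)
    simp only [gQ_even, neg_zero] at h
    show (1 / (Real.pi * D)) * ∫ y in (-(0:ℝ)/2)..((2*Real.pi/D - 0)/2), gQ D y =
      (1 / (Real.pi * D)) * ∫ y in (-(2*Real.pi/D)/2)..((2*Real.pi/D - 2*Real.pi/D)/2), gQ D y
    rw [show -(0:ℝ)/2 = 0 by norm_num, show (2*Real.pi/D - 0)/2 = Real.pi/D by ring,
      show -(2*Real.pi/D)/2 = -(Real.pi/D) by ring,
      show (2*Real.pi/D - 2*Real.pi/D)/2 = 0 by ring]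
    rw [← h]
  have hIoo : Set.Ioo (0:ℝ) (2 * Real.pi / D) = interior (Set.Icc (0:ℝ) (2 * Real.pi / D)) :=
    (interior_Icc).symm
  have hmono : StrictMonoOn (Fint D) (Set.Icc (0:ℝ) (Real.pi / D)) := by
    apply strictMonoOn_of_deriv_pos (convex_Icc _ _) (Fint_cont D).continuousOn
    intro x hx
    rw [interior_Icc] at hx
    exact sign2 x hx.1 hx.2
  have hanti : StrictAntiOn (Fint D) (Set.Icc (Real.pi / D) (2 * Real.pi / D)) := by
    apply strictAntiOn_of_deriv_neg (convex_Icc _ _) (Fint_cont D).continuousOn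
    intro x hx
    rw [interior_Icc] at hx
    exact sign3 x hx.1 hx.2
  refine ⟨fun δ hδ => Fint_hasDeriv D hD hδ, sign2, sign3, hsymm, ?_⟩
  intro δ hδ
  rcases le_or_gt δ (Real.pi / D) with h | h
  · exact hmono.monotoneOn ⟨le_refl 0, by positivity⟩ ⟨hδ.1, h⟩ hδ.1
  · rw [hsymm]
    exact hanti.antitoneOn ⟨h.le, hδ.2⟩ ⟨hsub.le, le_refl _⟩ hδ.2
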